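/- Let n ≥ 2 and define ψ_k(x) = (1−|x|²)^{(n−1)/n + 1/(nk)} on the unit ball B^n ⊂ R^n for integers k ≥ 1. Then with respect to the hyperbolic metric g(x) = 4(1−|x|²)^{−2}Σdx_i², one has ∫_{B^n} ψ_k^n dVol_g = ω_{n−1} 2^{n−1} B(1/k, n/2) and ∫_{B^n} |∇_g ψ_k|_g^n dVol_g = ω_{n−1} 2^{n−1} ((n−1)/n + 1/(nk))^n B(1/k, n). -/

import Mathlib

open MeasureTheory Set Metric InnerProductSpace

lemma sq_image_Ioo : (fun r : ℝ => r ^ 2) '' Ioo 0 1 = Ioo 0 1 := by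
  ext t
  constructor
  · rintro ⟨r, ⟨hr0, hr1⟩, rfl⟩
    refine ⟨by positivity, ?_⟩
    show r ^ 2 < 1
    nlinarith
  · rintro ⟨ht0, ht1⟩
    exact ⟨Real.sqrt t, ⟨Real.sqrt_pos.2 ht0, by
      rw [show (1:ℝ) = Real.sqrt 1 by simp]; exact Real.sqrt_lt_sqrt ht0.le ht1⟩,
      Real.sq_sqrt ht0.le⟩

lemma subst_sq (g : ℝ → ℝ) :
    ∫ t in Ioo (0:ℝ) 1, g t = ∫ r in Ioo (0:ℝ) 1, (2 * r) * g (r ^ 2) := by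
  have hinj : InjOn (fun r : ℝ => r ^ 2) (Ioo 0 1) := by
    intro a ha b hb hab
    dsimp at hab
    have h0 : (a - b) * (a + b) = 0 := by linear_combination hab
    rcases mul_eq_zero.1 h0 with h | h
    · linarith
    · nlinarith [ha.1, hb.1]
  have h := integral_image_eq_integral_abs_deriv_smul (f := fun r : ℝ => r ^ 2)
    (f' := fun r => 2 * r) measurableSet_Ioo
    (fun x _ => ((hasDerivAt_pow 2 x).congr_deriv (by ring)).hasDerivWithinAt) hinj g
  rw [sq_image_Ioo] at h
  rw [h]
  refine setIntegral_congr_fun measurableSet_Ioo fun r hr => ?_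
  rw [abs_of_nonneg (by nlinarith [hr.1] : (0:ℝ) ≤ 2 * r)]
  simp [smul_eq_mul]

lemma radial (n : ℕ) (hn : 2 ≤ n) (F : ℝ → ℝ) :
    ∫ x in ball (0 : EuclideanSpace ℝ (Fin n)) 1, F ‖x‖
      = n * (volume (ball (0 : EuclideanSpace ℝ (Fin n)) 1)).toReal *
        ∫ r in Ioo (0:ℝ) 1, r ^ (n - 1) * F r := by
  haveI : Nontrivial (EuclideanSpace ℝ (Fin n)) := by
    refine Module.nontrivial_of_finrank_pos (R := ℝ) ?_
    rw [finrank_euclideanSpace_fin]; omega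
  have h1 : ∫ x in ball (0 : EuclideanSpace ℝ (Fin n)) 1, F ‖x‖
      = ∫ x : EuclideanSpace ℝ (Fin n), (Iio (1:ℝ)).indicator F ‖x‖ := by
    rw [← integral_indicator measurableSet_ball]
    congr 1
    ext x
    by_cases hx : x ∈ ball (0 : EuclideanSpace ℝ (Fin n)) 1
    · rw [indicator_of_mem hx, indicator_of_mem (by simpa [dist_eq_norm] using hx)]
    · rw [indicator_of_notMem hx, indicator_of_notMem (by simpa [dist_eq_norm] using hx)]
  rw [h1, MeasureTheory.integral_fun_norm_addHaar volume ((Iio (1:ℝ)).indicator F),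
    finrank_euclideanSpace_fin]
  have h2 : ∫ y in Ioi (0:ℝ), y ^ (n - 1) • (Iio (1:ℝ)).indicator F y
      = ∫ r in Ioo (0:ℝ) 1, r ^ (n - 1) * F r := by
    have heq : (fun y : ℝ => y ^ (n - 1) • (Iio (1:ℝ)).indicator F y)
        = (Iio (1:ℝ)).indicator (fun y => y ^ (n - 1) * F y) := by
      ext y
      by_cases hy : y ∈ Iio (1:ℝ) <;> simp [indicator_apply, hy, smul_eq_mul]
    rw [heq, setIntegral_indicator measurableSet_Iio, Ioi_inter_Iio]
  rw [h2, nsmul_eq_mul, smul_eq_mul, mul_assoc]; rfl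

lemma grad_rpow (n : ℕ) (α : ℝ) (x : EuclideanSpace ℝ (Fin n)) (hx : 0 < 1 - ‖x‖ ^ 2) :
    HasGradientAt (fun y : EuclideanSpace ℝ (Fin n) => (1 - ‖y‖ ^ 2) ^ α)
      ((α * (1 - ‖x‖ ^ 2) ^ (α - 1) * (-2)) • x) x := by
  have h1 : HasFDerivAt (fun y : EuclideanSpace ℝ (Fin n) => (inner ℝ y y : ℝ))
      ((fderivInnerCLM ℝ (x, x)).comp ((ContinuousLinearMap.id ℝ (EuclideanSpace ℝ (Fin n))).prod
        (ContinuousLinearMap.id ℝ (EuclideanSpace ℝ (Fin n))))) x :=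
    (hasFDerivAt_id x).inner ℝ (hasFDerivAt_id x)
  have h1' : HasFDerivAt (fun y : EuclideanSpace ℝ (Fin n) => 1 - ‖y‖ ^ 2)
      (-((fderivInnerCLM ℝ (x, x)).comp ((ContinuousLinearMap.id ℝ (EuclideanSpace ℝ (Fin n))).prod
        (ContinuousLinearMap.id ℝ (EuclideanSpace ℝ (Fin n)))))) x := by
    have := (hasFDerivAt_const (1:ℝ) x).sub h1
    simp only [real_inner_self_eq_norm_sq] at this
    rw [zero_sub] at this
    exact this
  have h3 := HasDerivAt.comp_hasFDerivAt x
    (Real.hasDerivAt_rpow_const (p := α) (x := 1 - ‖x‖ ^ 2) (Or.inl hx.ne')) h1'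
  rw [hasGradientAt_iff_hasFDerivAt]
  have hlin : (toDual ℝ (EuclideanSpace ℝ (Fin n))) ((α * (1 - ‖x‖ ^ 2) ^ (α - 1) * (-2)) • x)
      = (α * (1 - ‖x‖ ^ 2) ^ (α - 1)) •
        (-((fderivInnerCLM ℝ (x, x)).comp ((ContinuousLinearMap.id ℝ (EuclideanSpace ℝ (Fin n))).prod
          (ContinuousLinearMap.id ℝ (EuclideanSpace ℝ (Fin n)))))) := by
    apply ContinuousLinearMap.ext
    intro v
    simp [toDual_apply_apply, fderivInnerCLM_apply, real_inner_smul_left, real_inner_comm]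
    have hc : ∑ i, v i * x i = ∑ i, x i * v i := Finset.sum_congr rfl fun i _ => mul_comm _ _
    ring
  rw [hlin]
  exact h3

lemma beta_swap (a b : ℝ) : (∫ t in (0:ℝ)..1, t ^ (a-1) * (1-t) ^ (b-1))
    = ∫ t in Ioo (0:ℝ) 1, t ^ (b-1) * (1-t) ^ (a-1) := by
  have h := intervalIntegral.integral_comp_sub_left (a := (0:ℝ)) (b := (1:ℝ))
    (fun t : ℝ => t ^ (b-1) * (1-t) ^ (a-1)) 1
  simp only [sub_sub_cancel, sub_zero, sub_self] at h
  rw [show (∫ t in (0:ℝ)..1, t ^ (a-1) * (1-t) ^ (b-1))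
      = ∫ t in (0:ℝ)..1, (1-t) ^ (b-1) * t ^ (a-1) from
    intervalIntegral.integral_congr fun t _ => mul_comm _ _, h,
    intervalIntegral.integral_of_le zero_le_one, integral_Ioc_eq_integral_Ioo]

theorem psi_k_integrals (n : ℕ) (hn : 2 ≤ n) (k : ℕ) (hk : 1 ≤ k)
    (ω : ℝ) (hω : ω = n * (volume (ball (0 : EuclideanSpace ℝ (Fin n)) 1)).toReal)
    (B : ℝ → ℝ → ℝ)
    (hB : ∀ a b : ℝ, B a b = ∫ t in (0:ℝ)..1, t ^ (a - 1) * (1 - t) ^ (b - 1))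
    (ψ : EuclideanSpace ℝ (Fin n) → ℝ)
    (hψ : ∀ x : EuclideanSpace ℝ (Fin n),
      ψ x = (1 - ‖x‖ ^ 2) ^ (((n : ℝ) - 1) / n + 1 / ((n : ℝ) * k))) :
    (∫ x in ball (0 : EuclideanSpace ℝ (Fin n)) 1, ψ x ^ n * (2 / (1 - ‖x‖ ^ 2)) ^ n
      = ω * 2 ^ (n - 1) * B (1 / k) ((n : ℝ) / 2)) ∧
    (∫ x in ball (0 : EuclideanSpace ℝ (Fin n)) 1,
        ((1 - ‖x‖ ^ 2) / 2 * ‖gradient ψ x‖) ^ n * (2 / (1 - ‖x‖ ^ 2)) ^ n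
      = ω * 2 ^ (n - 1) * (((n : ℝ) - 1) / n + 1 / ((n : ℝ) * k)) ^ n * B (1 / k) n) := by
  have hn0 : (n:ℝ) ≠ 0 := Nat.cast_ne_zero.2 (by omega)
  have hk0 : (k:ℝ) ≠ 0 := Nat.cast_ne_zero.2 (by omega)
  set α : ℝ := ((n : ℝ) - 1) / n + 1 / ((n : ℝ) * k) with hα
  have hα_pos : 0 < α := by
    have h1 : (0:ℝ) ≤ ((n:ℝ)-1)/(n:ℝ) := by
      apply div_nonneg
      · have : (1:ℝ) ≤ (n:ℝ) := by exact_mod_cast (by omega : 1 ≤ n)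
        linarith
      · positivity
    have h2 : (0:ℝ) < 1/((n:ℝ)*(k:ℝ)) := by positivity
    rw [hα]; linarith
  have hnα : α * (n:ℝ) = (n:ℝ) - 1 + 1/(k:ℝ) := by
    rw [hα]; field_simp
  set c : ℝ := 1/(k:ℝ) - 1 with hc
  have key : ∀ p : ℝ, 0 < p → (p ^ α) ^ n * (2 / p) ^ n = 2 ^ n * p ^ c := by
    intro p hp
    have h1 : (p ^ α) ^ n = p ^ (α * (n:ℝ)) := by
      rw [← Real.rpow_natCast (p ^ α) n, ← Real.rpow_mul hp.le]
    have h2 : (2 / p : ℝ) ^ n = 2 ^ n / p ^ ((n:ℕ):ℝ) := by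
      rw [div_pow, Real.rpow_natCast]
    have h3 : p ^ (α * (n:ℝ)) / p ^ ((n:ℕ):ℝ) = p ^ c := by
      rw [← Real.rpow_sub hp]
      congr 1
      rw [hnα, hc]; ring
    calc (p ^ α) ^ n * (2 / p) ^ n = 2 ^ n * (p ^ (α * (n:ℝ)) / p ^ ((n:ℕ):ℝ)) := by
          rw [h1, h2]; ring
    _ = 2 ^ n * p ^ c := by rw [h3]
  have hball : ∀ x : EuclideanSpace ℝ (Fin n), x ∈ ball (0 : EuclideanSpace ℝ (Fin n)) 1 →
      0 < 1 - ‖x‖ ^ 2 := by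
    intro x hx
    have h : ‖x‖ < 1 := mem_ball_zero_iff.1 hx
    nlinarith [norm_nonneg x]
  have eq1 : ∀ x ∈ ball (0 : EuclideanSpace ℝ (Fin n)) 1,
      ψ x ^ n * (2 / (1 - ‖x‖ ^ 2)) ^ n
        = (fun r : ℝ => 2 ^ n * (1 - r ^ 2) ^ c) ‖x‖ := by
    intro x hx
    rw [hψ x]
    exact key _ (hball x hx)
  have hψfun : ψ = fun y : EuclideanSpace ℝ (Fin n) => (1 - ‖y‖ ^ 2) ^ α := funext hψ
  have eqg : ∀ x ∈ ball (0 : EuclideanSpace ℝ (Fin n)) 1,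
      gradient ψ x = (α * (1 - ‖x‖ ^ 2) ^ (α - 1) * (-2)) • x := by
    intro x hx
    rw [hψfun]
    exact (grad_rpow n α x (hball x hx)).gradient
  have eq2 : ∀ x ∈ ball (0 : EuclideanSpace ℝ (Fin n)) 1,
      ((1 - ‖x‖ ^ 2) / 2 * ‖gradient ψ x‖) ^ n * (2 / (1 - ‖x‖ ^ 2)) ^ n
        = (fun r : ℝ => 2 ^ n * α ^ n * r ^ n * (1 - r ^ 2) ^ c) ‖x‖ := by
    intro x hx
    have hp := hball x hx
    have hq : 0 < (1 - ‖x‖ ^ 2) ^ (α - 1) := Real.rpow_pos_of_pos hp _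
    rw [eqg x hx, norm_smul]
    have habs : ‖α * (1 - ‖x‖ ^ 2) ^ (α - 1) * (-2)‖ = 2 * α * (1 - ‖x‖ ^ 2) ^ (α - 1) := by
      rw [Real.norm_eq_abs, abs_of_nonpos (by nlinarith)]
      ring
    rw [habs]
    have hmul : (1 - ‖x‖ ^ 2) / 2 * (2 * α * (1 - ‖x‖ ^ 2) ^ (α - 1) * ‖x‖)
        = α * (1 - ‖x‖ ^ 2) ^ α * ‖x‖ := by
      have hpp : (1 - ‖x‖ ^ 2) * (1 - ‖x‖ ^ 2) ^ (α - 1) = (1 - ‖x‖ ^ 2) ^ α := by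
        nth_rewrite 1 [← Real.rpow_one (1 - ‖x‖ ^ 2)]
        rw [← Real.rpow_add hp]
        congr 1; ring
      calc (1 - ‖x‖ ^ 2) / 2 * (2 * α * (1 - ‖x‖ ^ 2) ^ (α - 1) * ‖x‖)
          = α * ((1 - ‖x‖ ^ 2) * (1 - ‖x‖ ^ 2) ^ (α - 1)) * ‖x‖ := by ring
      _ = α * (1 - ‖x‖ ^ 2) ^ α * ‖x‖ := by rw [hpp]
    rw [hmul]
    show (α * (1 - ‖x‖ ^ 2) ^ α * ‖x‖) ^ n * (2 / (1 - ‖x‖ ^ 2)) ^ n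
      = 2 ^ n * α ^ n * ‖x‖ ^ n * (1 - ‖x‖ ^ 2) ^ c
    have hkey := key (1 - ‖x‖ ^ 2) hp
    calc (α * (1 - ‖x‖ ^ 2) ^ α * ‖x‖) ^ n * (2 / (1 - ‖x‖ ^ 2)) ^ n
        = α ^ n * ‖x‖ ^ n * (((1 - ‖x‖ ^ 2) ^ α) ^ n * (2 / (1 - ‖x‖ ^ 2)) ^ n) := by
          rw [mul_pow, mul_pow]; ring
    _ = α ^ n * ‖x‖ ^ n * (2 ^ n * (1 - ‖x‖ ^ 2) ^ c) := by rw [hkey]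
    _ = 2 ^ n * α ^ n * ‖x‖ ^ n * (1 - ‖x‖ ^ 2) ^ c := by ring
  have h2n : (2:ℝ) ^ n = 2 ^ (n - 1) * 2 := by
    rw [← pow_succ]; congr 1; omega
  constructor
  · -- first integral
    have step1 : (∫ x in ball (0 : EuclideanSpace ℝ (Fin n)) 1,
          ψ x ^ n * (2 / (1 - ‖x‖ ^ 2)) ^ n)
        = ∫ x in ball (0 : EuclideanSpace ℝ (Fin n)) 1,
            (fun r : ℝ => 2 ^ n * (1 - r ^ 2) ^ c) ‖x‖ :=
      setIntegral_congr_fun measurableSet_ball eq1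
    rw [step1, radial n hn (fun r : ℝ => 2 ^ n * (1 - r ^ 2) ^ c)]
    have hrad : (∫ r in Ioo (0:ℝ) 1, r ^ (n-1) * (2 ^ n * (1 - r ^ 2) ^ c))
        = 2 ^ (n-1) * ∫ t in Ioo (0:ℝ) 1, t ^ ((n:ℝ)/2 - 1) * (1-t) ^ c := by
      rw [subst_sq (fun t => t ^ ((n:ℝ)/2 - 1) * (1-t) ^ c), ← MeasureTheory.integral_const_mul]
      refine setIntegral_congr_fun measurableSet_Ioo fun r hr => ?_
      have hr0 : (0:ℝ) < r := hr.1
      have h4 : (r ^ 2 : ℝ) ^ ((n:ℝ)/2 - 1) = r ^ (n - 2) := by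
        rw [← Real.rpow_natCast r 2, ← Real.rpow_mul hr0.le]
        rw [show ((2:ℕ):ℝ) * ((n:ℝ)/2 - 1) = ((n - 2 : ℕ) : ℝ) by
          rw [Nat.cast_sub hn]; push_cast; ring]
        rw [Real.rpow_natCast]
      have h5 : r ^ (n-1) = r ^ (n-2) * r := by
        rw [← pow_succ]; congr 1; omega
      show r ^ (n-1) * (2 ^ n * (1 - r ^ 2) ^ c)
        = 2 ^ (n-1) * (2 * r * ((r ^ 2) ^ ((n:ℝ)/2 - 1) * (1 - r ^ 2) ^ c))
      rw [h4, h5, h2n]; ring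
    rw [hrad, hB, beta_swap, hω, ← hc]
    ring
  · -- second integral
    have step2 : (∫ x in ball (0 : EuclideanSpace ℝ (Fin n)) 1,
          ((1 - ‖x‖ ^ 2) / 2 * ‖gradient ψ x‖) ^ n * (2 / (1 - ‖x‖ ^ 2)) ^ n)
        = ∫ x in ball (0 : EuclideanSpace ℝ (Fin n)) 1,
            (fun r : ℝ => 2 ^ n * α ^ n * r ^ n * (1 - r ^ 2) ^ c) ‖x‖ :=
      setIntegral_congr_fun measurableSet_ball eq2
    rw [step2, radial n hn (fun r : ℝ => 2 ^ n * α ^ n * r ^ n * (1 - r ^ 2) ^ c)]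
    have hrad : (∫ r in Ioo (0:ℝ) 1, r ^ (n-1) * (2 ^ n * α ^ n * r ^ n * (1 - r ^ 2) ^ c))
        = 2 ^ (n-1) * α ^ n * ∫ t in Ioo (0:ℝ) 1, t ^ ((n:ℝ) - 1) * (1-t) ^ c := by
      rw [subst_sq (fun t => t ^ ((n:ℝ) - 1) * (1-t) ^ c), ← MeasureTheory.integral_const_mul]
      refine setIntegral_congr_fun measurableSet_Ioo fun r hr => ?_
      have hr0 : (0:ℝ) < r := hr.1
      have h4 : (r ^ 2 : ℝ) ^ ((n:ℝ) - 1) = r ^ (2*n - 2) := by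
        rw [← Real.rpow_natCast r 2, ← Real.rpow_mul hr0.le]
        rw [show ((2:ℕ):ℝ) * ((n:ℝ) - 1) = ((2*n - 2 : ℕ) : ℝ) by
          rw [Nat.cast_sub (by omega : 2 ≤ 2*n)]; push_cast; ring]
        rw [Real.rpow_natCast]
      have h5 : r ^ (n-1) * r ^ n = r ^ (2*n-2) * r := by
        rw [← pow_add, ← pow_succ]; congr 1; omega
      show r ^ (n-1) * (2 ^ n * α ^ n * r ^ n * (1 - r ^ 2) ^ c)
        = 2 ^ (n-1) * α ^ n * (2 * r * ((r ^ 2) ^ ((n:ℝ) - 1) * (1 - r ^ 2) ^ c))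
      rw [h4, h2n]
      calc r ^ (n-1) * (2 ^ (n-1) * 2 * α ^ n * r ^ n * (1 - r ^ 2) ^ c)
          = (r ^ (n-1) * r ^ n) * (2 ^ (n-1) * 2 * α ^ n * (1 - r ^ 2) ^ c) := by ring
      _ = (r ^ (2*n-2) * r) * (2 ^ (n-1) * 2 * α ^ n * (1 - r ^ 2) ^ c) := by rw [h5]
      _ = 2 ^ (n-1) * α ^ n * (2 * r * (r ^ (2*n-2) * (1 - r ^ 2) ^ c)) := by ring
    rw [hrad, hB, beta_swap, hω, ← hc]
    ring
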